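/- For even p ∈ ℕ, define c¹_{p,j} = (−1)^{j+1}((p/2)!)²/(j·(p/2+j)!·(p/2−j)!) for j ∈ {−p/2,…,−1,1,…,p/2} and c¹_{p,0} = 0, and c²_{p,j} = 2c¹_{p,j}/j for j ≠ 0, c²_{p,0} = −2∑_{i=1}^{p/2} 1/i². Then ∑_{j=−p/2}^{p/2} c²_{p,j} j^k = 0 for k = 0, k = 1, and for all odd k, and ∑_{j=−p/2}^{p/2} c²_{p,j} j² = 2. -/

import Mathlib

/-- Weights `c¹_{p,j}` of the `p`th-order (`p = 2m`) centered difference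
approximation of the first derivative. -/
noncomputable def c1 (m : ℕ) (j : ℤ) : ℝ :=
  if j = 0 then 0
  else ((-1 : ℝ)^(j+1) * (Nat.factorial m : ℝ)^2)
    / ((j : ℝ) * (Nat.factorial ((m : ℤ) + j).toNat : ℝ)
        * (Nat.factorial ((m : ℤ) - j).toNat : ℝ))

/-- Weights `c²_{p,j}` of the `p`th-order (`p = 2m`) centered difference
approximation of the second derivative: `c²_{p,j} = 2c¹_{p,j}/j` for `j ≠ 0`
and `c²_{p,0} = −2∑_{i=1}^{p/2} 1/i²`. -/
noncomputable def c2 (m : ℕ) (j : ℤ) : ℝ :=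
  if j = 0 then -2 * ∑ i ∈ Finset.Icc 1 m, (1 : ℝ) / (i : ℝ)^2
  else 2 * c1 m j / (j : ℝ)

/-! ### Auxiliary combinatorial machinery -/

/-- `aa m j = (m!)² / ((m+j)!(m−j)!)`. -/
noncomputable def aa (m j : ℕ) : ℝ :=
  (Nat.factorial m : ℝ)^2 / ((Nat.factorial (m+j) : ℝ) * (Nat.factorial (m-j) : ℝ))

lemma fact_ne (n : ℕ) : (Nat.factorial n : ℝ) ≠ 0 := by
  exact_mod_cast (Nat.factorial_pos n).ne'

lemma aa_succ (m j : ℕ) (h : j < m) :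
    aa m (j+1) * ((m:ℝ) + j + 1) = aa m j * ((m:ℝ) - j) := by
  unfold aa
  rw [show m + (j+1) = (m+j)+1 by omega, show m - j = (m-(j+1))+1 by omega,
    Nat.factorial_succ, Nat.factorial_succ]
  have h1 : ((m - (j+1) : ℕ) : ℝ) = (m:ℝ) - j - 1 := by
    push_cast [Nat.cast_sub h]
    ring
  have h2 : (m:ℝ) - j ≠ 0 := by
    have : (j:ℝ) < m := by exact_mod_cast h
    linarith
  push_cast [h1]
  have h3 : (m:ℝ) + j + 1 ≠ 0 := by positivity
  field_simp
  ring_nf; rw [← sub_mul, mul_inv_cancel₀ h2]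

lemma aa_one (m : ℕ) (hm : 1 ≤ m) : aa m 1 = (m:ℝ) / ((m:ℝ)+1) := by
  unfold aa
  rw [Nat.factorial_succ, show m.factorial = m * (m-1).factorial by
    rw (occs := .pos [1]) [show m = (m-1)+1 by omega]
    rw [Nat.factorial_succ]; congr 1; omega]
  push_cast
  have h0 : (0:ℝ) < (m-1).factorial := by exact_mod_cast (m-1).factorial_pos
  field_simp

lemma telescope (g : ℕ → ℝ) (n : ℕ) :
    ∑ x ∈ Finset.Icc 1 n, (g x - g (x+1)) = g 1 - g (n+1) := by
  induction n with
  | zero => simp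
  | succ k ih =>
      rw [Finset.sum_Icc_succ_top (by omega), ih]
      ring

/-- `∑_{j=1}^m (−1)^{j+1} (m!)²/((m+j)!(m−j)!) = 1/2`. -/
lemma sum_S (m : ℕ) (hm : 1 ≤ m) :
    ∑ j ∈ Finset.Icc 1 m, (-1:ℝ)^(j+1) * aa m j = 1/2 := by
  have hm0 : (m:ℝ) ≠ 0 := by positivity
  set b : ℕ → ℝ := fun j => if j ≤ m then (-1:ℝ)^(j+1) * (((m:ℝ)+j)/(2*m)) * aa m j else 0
    with hb
  have key : ∀ j ∈ Finset.Icc 1 m, (-1:ℝ)^(j+1) * aa m j = b j - b (j+1) := by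
    intro j hj
    rw [Finset.mem_Icc] at hj
    rcases eq_or_lt_of_le hj.2 with h | h
    · subst h
      simp only [hb, if_pos le_rfl, if_neg (by omega : ¬ j + 1 ≤ j)]
      have : ((j:ℝ) + j)/(2*j) = 1 := by
        field_simp
        ring
      rw [this]
      ring
    · have hj1 : ((m:ℝ) + j + 1) ≠ 0 := by positivity
      have has : aa m (j+1) = aa m j * ((m:ℝ) - j) / ((m:ℝ) + j + 1) := by
        rw [← aa_succ m j h]
        field_simp
      simp only [hb, if_pos hj.2, if_pos (by omega : j + 1 ≤ m), has]
      push_cast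
      rw [pow_succ]
      field_simp
      ring
  rw [Finset.sum_congr rfl key, telescope]
  simp only [hb, if_pos hm, if_neg (by omega : ¬ m + 1 ≤ m), aa_one m hm]
  push_cast
  field_simp
  ring

lemma aa_rel (m j : ℕ) (h : j ≤ m) :
    aa m j * ((m:ℝ)+1)^2 = aa (m+1) j * (((m:ℝ)+1)^2 - (j:ℝ)^2) := by
  have hj : (j:ℝ) ≤ m := by exact_mod_cast h
  have e1 : ((Nat.factorial (m+1) : ℕ) : ℝ) = ((m:ℝ)+1) * Nat.factorial m := by
    rw [Nat.factorial_succ]; push_cast; ring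
  have e2 : ((Nat.factorial (m+1+j) : ℕ) : ℝ) = ((m:ℝ)+1+j) * Nat.factorial (m+j) := by
    rw [show m+1+j = (m+j)+1 by omega, Nat.factorial_succ]; push_cast; ring
  have e3 : ((Nat.factorial (m+1-j) : ℕ) : ℝ) = ((m:ℝ)+1-j) * Nat.factorial (m-j) := by
    rw [show m+1-j = (m-j)+1 by omega, Nat.factorial_succ]
    push_cast [Nat.cast_sub h]; ring
  have hA : ((Nat.factorial (m+j) : ℕ) : ℝ) * (Nat.factorial (m-j) : ℕ) ≠ 0 :=
    mul_ne_zero (fact_ne _) (fact_ne _)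
  have hB : (((m:ℝ)+1+j) * Nat.factorial (m+j)) * (((m:ℝ)+1-j) * Nat.factorial (m-j)) ≠ 0 := by
    apply mul_ne_zero <;> apply mul_ne_zero
    · positivity
    · exact fact_ne _
    · intro hc; nlinarith
    · exact fact_ne _
  unfold aa
  rw [e1, e2, e3, div_mul_eq_mul_div, div_mul_eq_mul_div, div_eq_div_iff hA hB]
  ring

/-- `∑_{j=1}^m (−1)^{j+1} (m!)²/(j²(m+j)!(m−j)!) = (1/2)∑_{i=1}^m 1/i²`. -/
lemma sum_T (m : ℕ) :
    ∑ j ∈ Finset.Icc 1 m, (-1:ℝ)^(j+1) * aa m j / (j:ℝ)^2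
      = (1/2) * ∑ i ∈ Finset.Icc 1 m, (1:ℝ)/(i:ℝ)^2 := by
  induction m with
  | zero => simp
  | succ n ih =>
    rw [Finset.sum_Icc_succ_top (by omega), Finset.sum_Icc_succ_top (by omega)]
    have hn1 : ((n:ℝ)+1) ≠ 0 := by positivity
    have hstep : ∀ j ∈ Finset.Icc 1 n, (-1:ℝ)^(j+1) * aa (n+1) j / (j:ℝ)^2
        = (-1:ℝ)^(j+1) * aa n j / (j:ℝ)^2 + (-1:ℝ)^(j+1) * aa (n+1) j / ((n:ℝ)+1)^2 := by
      intro j hj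
      rw [Finset.mem_Icc] at hj
      have hj0 : (j:ℝ) ≠ 0 := by
        have : 0 < j := hj.1
        positivity
      have haj : aa n j = aa (n+1) j * (((n:ℝ)+1)^2 - (j:ℝ)^2) / ((n:ℝ)+1)^2 := by
        rw [← aa_rel n j hj.2]
        field_simp
      rw [haj]
      field_simp
      ring
    rw [Finset.sum_congr rfl hstep, Finset.sum_add_distrib, ih]
    have hS := sum_S (n+1) (by omega)
    rw [Finset.sum_Icc_succ_top (by omega)] at hS
    have hsum : ∑ j ∈ Finset.Icc 1 n, (-1:ℝ)^(j+1) * aa (n+1) j / ((n:ℝ)+1)^2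
        = (∑ j ∈ Finset.Icc 1 n, (-1:ℝ)^(j+1) * aa (n+1) j) / ((n:ℝ)+1)^2 := by
      rw [Finset.sum_div]
    rw [hsum]
    have : ∑ j ∈ Finset.Icc 1 n, (-1:ℝ)^(j+1) * aa (n+1) j
        = 1/2 - (-1:ℝ)^(n+1+1) * aa (n+1) (n+1) := by
      linarith
    rw [this]
    push_cast
    field_simp
    ring

lemma c2_coe (m j : ℕ) (h1 : 1 ≤ j) (h2 : j ≤ m) :
    c2 m (j:ℤ) = 2 * ((-1:ℝ)^(j+1) * aa m j) / (j:ℝ)^2 := by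
  have hj0 : (j:ℤ) ≠ 0 := by omega
  have t1 : ((m:ℤ) + (j:ℤ)).toNat = m + j := by omega
  have t2 : ((m:ℤ) - (j:ℤ)).toNat = m - j := by omega
  rw [c2, if_neg hj0, c1, if_neg hj0, t1, t2,
    show (j:ℤ)+1 = ((j+1:ℕ):ℤ) by push_cast; ring, zpow_natCast]
  have hjr : ((j:ℤ):ℝ) = (j:ℝ) := by push_cast; ring
  rw [hjr]
  have hj : (j:ℝ) ≠ 0 := by
    have : 0 < j := h1
    positivity
  unfold aa
  field_simp

lemma c2_neg_coe (m j : ℕ) (h1 : 1 ≤ j) (h2 : j ≤ m) :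
    c2 m (-(j:ℤ)) = 2 * ((-1:ℝ)^(j+1) * aa m j) / (j:ℝ)^2 := by
  have hj0 : -(j:ℤ) ≠ 0 := by omega
  have t1 : ((m:ℤ) + -(j:ℤ)).toNat = m - j := by omega
  have t2 : ((m:ℤ) - -(j:ℤ)).toNat = m + j := by omega
  rw [c2, if_neg hj0, c1, if_neg hj0, t1, t2,
    show -(j:ℤ)+1 = -(((j-1:ℕ)):ℤ) by omega, zpow_neg, zpow_natCast]
  have hpow : ((-1:ℝ)^(j-1))⁻¹ = (-1:ℝ)^(j+1) := by
    have h3 : ((-1:ℝ)^(j-1)) * ((-1:ℝ)^(j-1)) = 1 := by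
      rw [← pow_add, ← two_mul]
      rw [pow_mul]
      norm_num
    rw [inv_eq_of_mul_eq_one_right h3, show j+1 = (j-1)+2 by omega, pow_add]
    norm_num
  rw [hpow]
  push_cast
  have hj : (j:ℝ) ≠ 0 := by
    have : 0 < j := h1
    positivity
  unfold aa
  field_simp

lemma split_sum (f : ℤ → ℝ) (m : ℕ) :
    ∑ j ∈ Finset.Icc (-(m:ℤ)) (m:ℤ), f j
      = f 0 + ∑ j ∈ Finset.Icc 1 m, (f (j:ℤ) + f (-(j:ℤ))) := by
  induction m with
  | zero => simp
  | succ n ih =>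
    have h1 : Finset.Icc (-((n+1:ℕ):ℤ)) ((n+1:ℕ):ℤ)
        = insert (-((n+1:ℕ):ℤ)) (insert ((n+1:ℕ):ℤ) (Finset.Icc (-(n:ℤ)) (n:ℤ))) := by
      ext x
      simp only [Finset.mem_Icc, Finset.mem_insert]
      push_cast
      omega
    rw [h1, Finset.sum_insert, Finset.sum_insert, ih,
      Finset.sum_Icc_succ_top (by omega : 1 ≤ n + 1)]
    · push_cast
      ring
    · simp only [Finset.mem_Icc]
      push_cast
      omega
    · simp only [Finset.mem_insert, Finset.mem_Icc]
      push_cast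
      omega

/-- Moment conditions of the centered second-derivative stencil of order
`p = 2m`, `m ≥ 1`: `∑_j c²_{p,j} j^k = 0` for `k = 0`, `k = 1` and all odd `k`,
while `∑_j c²_{p,j} j² = 2`. -/
theorem centered_difference_moments (m : ℕ) (hm : 1 ≤ m) :
    (∀ k : ℕ, k = 0 ∨ k = 1 ∨ Odd k →
      ∑ j ∈ Finset.Icc (-(m : ℤ)) (m : ℤ), c2 m j * (j : ℝ)^k = 0)
    ∧ ∑ j ∈ Finset.Icc (-(m : ℤ)) (m : ℤ), c2 m j * (j : ℝ)^2 = 2 := by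
  have hc0 : c2 m 0 = -2 * ∑ i ∈ Finset.Icc 1 m, (1 : ℝ) / (i : ℝ)^2 := by
    rw [c2, if_pos rfl]
  constructor
  · intro k hk
    rcases hk with hk | hk | hk
    · -- k = 0
      subst hk
      rw [split_sum (fun j => c2 m j * (j:ℝ)^0) m]
      simp only [pow_zero, mul_one]
      have hpair : ∀ j ∈ Finset.Icc 1 m, c2 m (j:ℤ) + c2 m (-(j:ℤ))
          = 4 * ((-1:ℝ)^(j+1) * aa m j / (j:ℝ)^2) := by
        intro j hj
        rw [Finset.mem_Icc] at hj
        rw [c2_coe m j hj.1 hj.2, c2_neg_coe m j hj.1 hj.2]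
        ring
      rw [Finset.sum_congr rfl hpair, ← Finset.mul_sum, sum_T m, hc0]
      ring
    · -- k = 1 is odd; reduce to the odd case below by direct computation
      subst hk
      rw [split_sum (fun j => c2 m j * (j:ℝ)^1) m]
      push_cast
      have hpair : ∀ j ∈ Finset.Icc 1 m,
          c2 m (j:ℤ) * (j:ℝ)^1 + c2 m (-(j:ℤ)) * (-(j:ℝ))^1 = 0 := by
        intro j hj
        rw [Finset.mem_Icc] at hj
        rw [c2_coe m j hj.1 hj.2, c2_neg_coe m j hj.1 hj.2]
        push_cast
        ring
      rw [Finset.sum_congr rfl hpair]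
      simp
    · -- k odd
      rw [split_sum (fun j => c2 m j * (j:ℝ)^k) m]
      push_cast
      have hk0 : k ≠ 0 := by
        rintro rfl
        exact ((Nat.not_odd_iff_even.mpr Even.zero)) hk
      have hpair : ∀ j ∈ Finset.Icc 1 m,
          c2 m (j:ℤ) * (j:ℝ)^k + c2 m (-(j:ℤ)) * (-(j:ℝ))^k = 0 := by
        intro j hj
        rw [Finset.mem_Icc] at hj
        rw [c2_coe m j hj.1 hj.2, c2_neg_coe m j hj.1 hj.2]
        push_cast
        rw [hk.neg_pow]
        ring
      rw [Finset.sum_congr rfl hpair]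
      simp [zero_pow hk0]
  · rw [split_sum (fun j => c2 m j * (j:ℝ)^2) m]
    push_cast
    have hpair : ∀ j ∈ Finset.Icc 1 m,
        c2 m (j:ℤ) * (j:ℝ)^2 + c2 m (-(j:ℤ)) * (-(j:ℝ))^2
          = 4 * ((-1:ℝ)^(j+1) * aa m j) := by
      intro j hj
      rw [Finset.mem_Icc] at hj
      have hj0 : (j:ℝ) ≠ 0 := by
        have : 0 < j := hj.1
        positivity
      rw [c2_coe m j hj.1 hj.2, c2_neg_coe m j hj.1 hj.2]
      push_cast
      field_simp
      ring
    rw [Finset.sum_congr rfl hpair, ← Finset.mul_sum, sum_S m hm]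
    norm_num
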